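/- Let φ be a conformal immersion on an open set U ⊆ ℝ² with conformal factor λ, with unit normal n := (φ_u × φ_v)/‖φ_u × φ_v‖ and μ := (∂_z φ_z, n). Then the first structure (Gauss) equation holds at every point of U: ∂_z φ_z = (2 ∂_z λ / λ) φ_z + μ n. -/

import Mathlib

open Complex

noncomputable section

/-- Euclidean 3-space. -/
abbrev E3 : Type := EuclideanSpace ℝ (Fin 3)

/-- Partial derivative in the first (u) coordinate direction. -/
def pu {F : Type} [NormedAddCommGroup F] [NormedSpace ℝ F]
    (f : ℝ × ℝ → F) (p : ℝ × ℝ) : F := fderiv ℝ f p (1, 0)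

/-- Partial derivative in the second (v) coordinate direction. -/
def pv {F : Type} [NormedAddCommGroup F] [NormedSpace ℝ F]
    (f : ℝ × ℝ → F) (p : ℝ × ℝ) : F := fderiv ℝ f p (0, 1)

/-- Cross product on ℝ³. -/
def cross (a b : E3) : E3 :=
  (WithLp.equiv 2 (Fin 3 → ℝ)).symm
    ![a 1 * b 2 - a 2 * b 1, a 2 * b 0 - a 0 * b 2, a 0 * b 1 - a 1 * b 0]

/-- The Euclidean inner product on ℝ³. -/
def ip (a b : E3) : ℝ := @inner ℝ _ _ a b

/-- `φ` is a smooth conformal immersion on the open set `U ⊆ ℝ²` with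
(smooth, positive) conformal factor `lam`:  ⟨φ_u,φ_u⟩ = λ², ⟨φ_v,φ_v⟩ = λ²,
⟨φ_u,φ_v⟩ = 0 at every point of `U`. -/
def IsConfImm (U : Set (ℝ × ℝ)) (φ : ℝ × ℝ → E3) (lam : ℝ × ℝ → ℝ) : Prop :=
  IsOpen U ∧ ContDiffOn ℝ (⊤ : ℕ∞) φ U ∧ ContDiffOn ℝ (⊤ : ℕ∞) lam U ∧
    ∀ p ∈ U, 0 < lam p ∧
      ip (pu φ p) (pu φ p) = (lam p) ^ 2 ∧
      ip (pv φ p) (pv φ p) = (lam p) ^ 2 ∧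
      ip (pu φ p) (pv φ p) = 0

/-- Complexification ℝ³ ↪ ℂ³. -/
def toC (x : E3) : Fin 3 → ℂ := fun j => (x j : ℂ)

/-- Complex-bilinear dot product on ℂ³:  (a,b) = Σⱼ aⱼ bⱼ. -/
def cdot (a b : Fin 3 → ℂ) : ℂ := ∑ j, a j * b j

/-- ∂_z = ½(∂_u − i ∂_v) for maps into complex normed spaces. -/
def dz {F : Type} [NormedAddCommGroup F] [NormedSpace ℂ F]
    (f : ℝ × ℝ → F) (p : ℝ × ℝ) : F :=
  (2 : ℂ)⁻¹ • (pu f p - Complex.I • pv f p)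

/-- ∂_z̄ = ½(∂_u + i ∂_v) for maps into complex normed spaces. -/
def dzbar {F : Type} [NormedAddCommGroup F] [NormedSpace ℂ F]
    (f : ℝ × ℝ → F) (p : ℝ × ℝ) : F :=
  (2 : ℂ)⁻¹ • (pu f p + Complex.I • pv f p)

/-- `f_z := ½(f_u − i f_v) ∈ ℂ³` for a real-vector-valued map `f` (in particular `φ_z`). -/
def phiz (f : ℝ × ℝ → E3) (p : ℝ × ℝ) : Fin 3 → ℂ :=
  (2 : ℂ)⁻¹ • (toC (pu f p) - Complex.I • toC (pv f p))

/-- `f_z̄ := ½(f_u + i f_v) ∈ ℂ³` for a real-vector-valued map `f` (in particular `φ_z̄`). -/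
def phizbar (f : ℝ × ℝ → E3) (p : ℝ × ℝ) : Fin 3 → ℂ :=
  (2 : ℂ)⁻¹ • (toC (pu f p) + Complex.I • toC (pv f p))

/-- The unit normal n = (φ_u × φ_v)/‖φ_u × φ_v‖. -/
def nvec (φ : ℝ × ℝ → E3) (p : ℝ × ℝ) : E3 :=
  ‖cross (pu φ p) (pv φ p)‖⁻¹ • cross (pu φ p) (pv φ p)

/-- Componentwise Laplacian Δ = ∂_uu + ∂_vv. -/
def lap {F : Type} [NormedAddCommGroup F] [NormedSpace ℝ F]
    (f : ℝ × ℝ → F) (p : ℝ × ℝ) : F := pu (pu f) p + pv (pv f) p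

/-- Mean curvature H = ⟨Δφ, n⟩/(2λ²). -/
def mcurv (φ : ℝ × ℝ → E3) (lam : ℝ × ℝ → ℝ) (p : ℝ × ℝ) : ℝ :=
  ip (lap φ p) (nvec φ p) / (2 * (lam p) ^ 2)

/-- μ := (∂_z φ_z, n). -/
def muQ (φ : ℝ × ℝ → E3) (p : ℝ × ℝ) : ℂ :=
  cdot (dz (phiz φ) p) (toC (nvec φ p))

/-! ### Auxiliary algebraic lemmas -/

lemma ip_expand (x y : E3) : ip x y = x 0 * y 0 + x 1 * y 1 + x 2 * y 2 := by
  simp [ip, PiLp.inner_apply, RCLike.inner_apply, Fin.sum_univ_three]; ring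

lemma ip_comm (x y : E3) : ip x y = ip y x := by
  simp only [ip_expand]; ring

lemma ip_smul_left (r : ℝ) (x y : E3) : ip (r • x) y = r * ip x y := by
  simp only [ip_expand, PiLp.smul_apply, smul_eq_mul]; ring

lemma cross0 (a b : E3) : cross a b 0 = a 1 * b 2 - a 2 * b 1 := rfl
lemma cross1 (a b : E3) : cross a b 1 = a 2 * b 0 - a 0 * b 2 := rfl
lemma cross2 (a b : E3) : cross a b 2 = a 0 * b 1 - a 1 * b 0 := rfl

lemma cdot_expand (v w : Fin 3 → ℂ) : cdot v w = v 0 * w 0 + v 1 * w 1 + v 2 * w 2 := by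
  simp [cdot, Fin.sum_univ_three]

lemma cdot_toC (x y : E3) : cdot (toC x) (toC y) = (ip x y : ℂ) := by
  simp only [cdot_expand, toC, ip_expand]; push_cast; ring

lemma lagrange (a b : E3) : ip (cross a b) (cross a b) = ip a a * ip b b - (ip a b)^2 := by
  simp only [ip_expand, cross0, cross1, cross2]; ring

lemma ip_cross_left (a b : E3) : ip a (cross a b) = 0 := by
  simp only [ip_expand, cross0, cross1, cross2]; ring

lemma ip_cross_right (a b : E3) : ip b (cross a b) = 0 := by
  simp only [ip_expand, cross0, cross1, cross2]; ring

lemma cdot_toC_smul_right (v : Fin 3 → ℂ) (r : ℝ) (x : E3) :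
    cdot v (toC (r • x)) = (r : ℂ) * cdot v (toC x) := by
  simp only [cdot_expand, toC, PiLp.smul_apply, smul_eq_mul]; push_cast; ring

/-- Orthogonal decomposition identity on ℂ³. -/
lemma decomp (a b : E3) (v : Fin 3 → ℂ) (hab : ip a b = 0)
    (h1 : cdot v (toC a) = 0) (h2 : cdot v (toC b) = 0)
    (h3 : cdot v (toC (cross a b)) = 0) (j : Fin 3) :
    ((ip a a : ℂ) * (ip b b : ℂ)) * v j = 0 := by
  have habC : (a 0 : ℂ) * b 0 + a 1 * b 1 + a 2 * b 2 = 0 := by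
    have := hab; rw [ip_expand] at this
    exact_mod_cast congrArg (Complex.ofReal) this
  rw [cdot_expand] at h1 h2 h3
  simp only [toC, cross0, cross1, cross2] at h1 h2 h3
  push_cast at h1 h2 h3
  have hc : ∀ w : ℂ, ((ip a a : ℂ) * (ip b b : ℂ)) * w
      = ((a 0:ℂ)^2 + a 1^2 + a 2^2) * ((b 0:ℂ)^2 + b 1^2 + b 2^2) * w := by
    intro w; rw [ip_expand, ip_expand]; push_cast; ring
  have k0 : ((ip a a : ℂ) * (ip b b : ℂ)) * v 0 = 0 := by
    rw [hc]
    linear_combination ((b 0:ℂ)^2 + b 1^2 + b 2^2) * (a 0:ℂ) * h1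
      + ((a 0:ℂ)^2 + a 1^2 + a 2^2) * (b 0:ℂ) * h2
      + ((a 1:ℂ)*b 2 - a 2*b 1) * h3
      + ((a 2:ℂ)*(b 2)*(v 0) - a 2*b 0*v 2 + a 1*b 1*v 0 - a 1*b 0*v 1 - a 0*b 2*v 2 - a 0*b 1*v 1 - a 0*b 0*v 0) * habC
  have k1 : ((ip a a : ℂ) * (ip b b : ℂ)) * v 1 = 0 := by
    rw [hc]
    linear_combination ((b 0:ℂ)^2 + b 1^2 + b 2^2) * (a 1:ℂ) * h1
      + ((a 0:ℂ)^2 + a 1^2 + a 2^2) * (b 1:ℂ) * h2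
      + ((a 2:ℂ)*b 0 - a 0*b 2) * h3
      + ((a 2:ℂ)*b 2*v 1 - a 2*b 1*v 2 - a 1*b 2*v 2 - a 1*b 1*v 1 - a 1*b 0*v 0 - a 0*b 1*v 0 + a 0*b 0*v 1) * habC
  have k2 : ((ip a a : ℂ) * (ip b b : ℂ)) * v 2 = 0 := by
    rw [hc]
    linear_combination ((b 0:ℂ)^2 + b 1^2 + b 2^2) * (a 2:ℂ) * h1
      + ((a 0:ℂ)^2 + a 1^2 + a 2^2) * (b 2:ℂ) * h2
      + ((a 0:ℂ)*b 1 - a 1*b 0) * h3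
      + (-(a 2:ℂ)*b 2*v 2 - a 2*b 1*v 1 - a 2*b 0*v 0 - a 1*b 2*v 1 + a 1*b 1*v 2 - a 0*b 2*v 0 + a 0*b 0*v 2) * habC
  fin_cases j
  · exact k0
  · exact k1
  · exact k2

/-! ### Auxiliary analytic lemmas -/

/-- toC as a continuous linear map. -/
def toCL : E3 →L[ℝ] (Fin 3 → ℂ) :=
  ContinuousLinearMap.pi fun j => Complex.ofRealCLM.comp (EuclideanSpace.proj j)

lemma hasFDerivAt_toC {f : ℝ × ℝ → E3} {p : ℝ × ℝ} (hf : DifferentiableAt ℝ f p) :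
    HasFDerivAt (fun q => toC (f q)) (toCL.comp (fderiv ℝ f p)) p :=
  toCL.hasFDerivAt.comp p hf.hasFDerivAt

lemma hasFDerivAt_phizlike {f g : ℝ × ℝ → E3} {p : ℝ × ℝ}
    (hf : DifferentiableAt ℝ f p) (hg : DifferentiableAt ℝ g p) :
    HasFDerivAt (fun q => (2:ℂ)⁻¹ • (toC (f q) - Complex.I • toC (g q)))
      ((2:ℂ)⁻¹ • (toCL.comp (fderiv ℝ f p) - Complex.I • toCL.comp (fderiv ℝ g p))) p :=
  by have := (((hasFDerivAt_toC hf).sub ((hasFDerivAt_toC hg).const_smul Complex.I)).const_smul ((2:ℂ)⁻¹)); exact this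

lemma pu_phizlike {f g : ℝ × ℝ → E3} {p : ℝ × ℝ}
    (hf : DifferentiableAt ℝ f p) (hg : DifferentiableAt ℝ g p) :
    pu (fun q => (2:ℂ)⁻¹ • (toC (f q) - Complex.I • toC (g q))) p
      = (2:ℂ)⁻¹ • (toC (pu f p) - Complex.I • toC (pu g p)) := by
  rw [pu, (hasFDerivAt_phizlike hf hg).fderiv]
  rfl

lemma pv_phizlike {f g : ℝ × ℝ → E3} {p : ℝ × ℝ}
    (hf : DifferentiableAt ℝ f p) (hg : DifferentiableAt ℝ g p) :
    pv (fun q => (2:ℂ)⁻¹ • (toC (f q) - Complex.I • toC (g q))) p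
      = (2:ℂ)⁻¹ • (toC (pv f p) - Complex.I • toC (pv g p)) := by
  rw [pv, (hasFDerivAt_phizlike hf hg).fderiv]
  rfl

lemma pu_ofReal {f : ℝ × ℝ → ℝ} {p : ℝ × ℝ} (hf : DifferentiableAt ℝ f p) :
    pu (fun q => (f q : ℂ)) p = Complex.ofReal (pu f p) := by
  have h : HasFDerivAt (fun q => ((f q : ℝ) : ℂ))
      (Complex.ofRealCLM.comp (fderiv ℝ f p)) p :=
    Complex.ofRealCLM.hasFDerivAt.comp p hf.hasFDerivAt
  rw [pu, h.fderiv]; rfl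

lemma pv_ofReal {f : ℝ × ℝ → ℝ} {p : ℝ × ℝ} (hf : DifferentiableAt ℝ f p) :
    pv (fun q => (f q : ℂ)) p = Complex.ofReal (pv f p) := by
  have h : HasFDerivAt (fun q => ((f q : ℝ) : ℂ))
      (Complex.ofRealCLM.comp (fderiv ℝ f p)) p :=
    Complex.ofRealCLM.hasFDerivAt.comp p hf.hasFDerivAt
  rw [pv, h.fderiv]; rfl

/-- Symmetry of mixed partials for C^∞ functions on an open set. -/
lemma mixed_symm {φ : ℝ × ℝ → E3} {U : Set (ℝ × ℝ)} {p : ℝ × ℝ}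
    (hφ : ContDiffOn ℝ (⊤:ℕ∞) φ U) (hU : IsOpen U) (hp : p ∈ U) :
    pv (pu φ) p = pu (pv φ) p := by
  have hmem : U ∈ nhds p := hU.mem_nhds hp
  have hd : ContDiffOn ℝ (⊤:ℕ∞) (fderiv ℝ φ) U :=
    hφ.fderiv_of_isOpen hU (m := (⊤:ℕ∞)) (by simp)
  have hdat : DifferentiableAt ℝ (fderiv ℝ φ) p :=
    (hd.differentiableOn (by simp)).differentiableAt hmem
  have hsymm : IsSymmSndFDerivAt ℝ φ p :=
    (hφ.contDiffAt hmem).isSymmSndFDerivAt (by rw [minSmoothness_of_isRCLikeNormedField]; show ((2:ℕ∞):WithTop ℕ∞) ≤ ((⊤:ℕ∞):WithTop ℕ∞); exact WithTop.coe_le_coe.mpr le_top)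
  have h1 : ∀ w y : ℝ × ℝ, fderiv ℝ (fun q => fderiv ℝ φ q w) p y
      = fderiv ℝ (fderiv ℝ φ) p y w := by
    intro w y
    rw [fderiv_clm_apply hdat (differentiableAt_const w)]
    simp
  show fderiv ℝ (fun q => fderiv ℝ φ q (1,0)) p (0,1) = fderiv ℝ (fun q => fderiv ℝ φ q (0,1)) p (1,0)
  rw [h1, h1]
  exact hsymm (0,1) (1,0)

set_option maxHeartbeats 1000000 in
/-- first structure / Gauss equation:
∂_z φ_z = (2 λ_z / λ) φ_z + μ n. -/
theorem conformal_first_structure_equation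
    (U : Set (ℝ × ℝ)) (φ : ℝ × ℝ → E3) (lam : ℝ × ℝ → ℝ)
    (h : IsConfImm U φ lam) :
    ∀ p ∈ U,
      dz (phiz φ) p
        = (2 * dz (fun q => (lam q : ℂ)) p / (lam p : ℂ)) • phiz φ p
          + muQ φ p • toC (nvec φ p) := by
  obtain ⟨hU, hφ, hlamS, hconf⟩ := h
  intro p hp
  have hmem : U ∈ nhds p := hU.mem_nhds hp
  -- differentiability infrastructure
  have hone : ((1:ℕ∞) : WithTop ℕ∞) ≤ ((⊤:ℕ∞) : WithTop ℕ∞) := by exact_mod_cast (le_top : (1:ℕ∞) ≤ ⊤)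
  have hφ1 : ContDiffOn ℝ (⊤:ℕ∞) (fderiv ℝ φ) U :=
    hφ.fderiv_of_isOpen hU (m := (⊤:ℕ∞)) (by simp)
  have hpuC : ContDiffOn ℝ (⊤:ℕ∞) (pu φ) U := by
    have := hφ1.clm_apply (contDiffOn_const (c := ((1:ℝ),(0:ℝ))))
    exact this
  have hpvC : ContDiffOn ℝ (⊤:ℕ∞) (pv φ) U := by
    have := hφ1.clm_apply (contDiffOn_const (c := ((0:ℝ),(1:ℝ))))
    exact this
  have hpuD : DifferentiableAt ℝ (pu φ) p :=
    (hpuC.differentiableOn (by simp)).differentiableAt hmem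
  have hpvD : DifferentiableAt ℝ (pv φ) p :=
    (hpvC.differentiableOn (by simp)).differentiableAt hmem
  have hlamD : DifferentiableAt ℝ lam p :=
    (hlamS.differentiableOn (by simp)).differentiableAt hmem
  -- abbreviations
  set a := pu φ p with ha
  set b := pv φ p with hb
  set A := pu (pu φ) p with hA
  set B := pu (pv φ) p with hB
  set Cv := pv (pv φ) p with hCv
  have hsym : pv (pu φ) p = B := mixed_symm hφ hU hp
  set L := lam p with hLdef
  set Lu := pu lam p with hLu
  set Lv := pv lam p with hLv
  have hL : 0 < L := (hconf p hp).1
  have ipaa : ip a a = L ^ 2 := (hconf p hp).2.1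
  have ipbb : ip b b = L ^ 2 := (hconf p hp).2.2.1
  have ipab : ip a b = 0 := (hconf p hp).2.2.2
  -- derivative of lam^2
  have hpow : ∀ y : ℝ × ℝ, fderiv ℝ (fun q => lam q ^ 2) p y = 2 * L * (fderiv ℝ lam p y) := by
    intro y
    have h2 : HasFDerivAt (fun q => lam q * lam q)
        (lam p • fderiv ℝ lam p + lam p • fderiv ℝ lam p) p :=
      hlamD.hasFDerivAt.mul hlamD.hasFDerivAt
    have heq : (fun q => lam q ^ 2) = fun q => lam q * lam q := by
      funext q; ring
    rw [heq, h2.fderiv]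
    simp only [ContinuousLinearMap.add_apply, ContinuousLinearMap.coe_smul',
      Pi.smul_apply, smul_eq_mul]
    ring
  -- the six inner-product derivative identities
  have e_uu : fderiv ℝ (fun q => ip (pu φ q) (pu φ q)) p = fderiv ℝ (fun q => lam q ^ 2) p := by
    apply Filter.EventuallyEq.fderiv_eq
    filter_upwards [hmem] with q hq
    exact (hconf q hq).2.1
  have e_vv : fderiv ℝ (fun q => ip (pv φ q) (pv φ q)) p = fderiv ℝ (fun q => lam q ^ 2) p := by
    apply Filter.EventuallyEq.fderiv_eq
    filter_upwards [hmem] with q hq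
    exact (hconf q hq).2.2.1
  have e_uv : fderiv ℝ (fun q => ip (pu φ q) (pv φ q)) p = fderiv ℝ (fun _ => (0:ℝ)) p := by
    apply Filter.EventuallyEq.fderiv_eq
    filter_upwards [hmem] with q hq
    exact (hconf q hq).2.2.2
  -- generic inner-product derivative formula
  have dip : ∀ (f g : ℝ × ℝ → E3), DifferentiableAt ℝ f p → DifferentiableAt ℝ g p →
      ∀ y : ℝ × ℝ, fderiv ℝ (fun q => ip (f q) (g q)) p y
        = ip (f p) (fderiv ℝ g p y) + ip (fderiv ℝ f p y) (g p) := by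
    intro f g hf hg y
    exact fderiv_inner_apply ℝ hf hg y
  -- six identities
  have I1 : ip A a = L * Lu := by
    have hh := DFunLike.congr_fun e_uu ((1:ℝ),(0:ℝ))
    rw [dip _ _ hpuD hpuD, hpow] at hh
    have h2 : ip a A + ip A a = 2 * L * Lu := hh
    have h3 := ip_comm a A
    linarith
  have I2 : ip B a = L * Lv := by
    have hh := DFunLike.congr_fun e_uu ((0:ℝ),(1:ℝ))
    rw [dip _ _ hpuD hpuD, hpow] at hh
    have h2 : ip a (pv (pu φ) p) + ip (pv (pu φ) p) a = 2 * L * Lv := hh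
    rw [hsym] at h2
    have h3 := ip_comm a B
    linarith
  have I3 : ip B b = L * Lu := by
    have hh := DFunLike.congr_fun e_vv ((1:ℝ),(0:ℝ))
    rw [dip _ _ hpvD hpvD, hpow] at hh
    have h2 : ip b B + ip B b = 2 * L * Lu := hh
    have h3 := ip_comm b B
    linarith
  have I4 : ip Cv b = L * Lv := by
    have hh := DFunLike.congr_fun e_vv ((0:ℝ),(1:ℝ))
    rw [dip _ _ hpvD hpvD, hpow] at hh
    have h2 : ip b Cv + ip Cv b = 2 * L * Lv := hh
    have h3 := ip_comm b Cv
    linarith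
  have I5 : ip A b = -(L * Lv) := by
    have hh := DFunLike.congr_fun e_uv ((1:ℝ),(0:ℝ))
    rw [dip _ _ hpuD hpvD] at hh
    simp only [fderiv_fun_const, Pi.zero_apply, ContinuousLinearMap.zero_apply] at hh
    have h2 : ip a B + ip A b = 0 := hh
    have h3 := ip_comm a B
    linarith
  have I6 : ip Cv a = -(L * Lu) := by
    have hh := DFunLike.congr_fun e_uv ((0:ℝ),(1:ℝ))
    rw [dip _ _ hpuD hpvD] at hh
    simp only [fderiv_fun_const, Pi.zero_apply, ContinuousLinearMap.zero_apply] at hh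
    have h2 : ip a Cv + ip (pv (pu φ) p) b = 0 := hh
    rw [hsym] at h2
    have h3 := ip_comm a Cv
    linarith
  -- structure of dz (phiz φ)
  have hZ : dz (phiz φ) p
      = (2:ℂ)⁻¹ • ((2:ℂ)⁻¹ • (toC A - Complex.I • toC B)
          - Complex.I • ((2:ℂ)⁻¹ • (toC B - Complex.I • toC Cv))) := by
    have hfun : phiz φ = fun q => (2:ℂ)⁻¹ • (toC (pu φ q) - Complex.I • toC (pv φ q)) := rfl
    rw [dz, hfun, pu_phizlike hpuD hpvD, pv_phizlike hpuD hpvD, hsym]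
  have cdotZ : ∀ y : E3, cdot (dz (phiz φ) p) (toC y)
      = (4:ℂ)⁻¹ * ((ip A y : ℂ) - (ip Cv y : ℂ) - 2 * Complex.I * (ip B y : ℂ)) := by
    intro y
    rw [hZ]
    simp only [cdot_expand, Pi.smul_apply, Pi.sub_apply, smul_eq_mul, toC, ip_expand]
    push_cast
    ring_nf
    simp only [Complex.I_sq]
    ring
  have cdotPhiz : ∀ y : E3, cdot (phiz φ p) (toC y)
      = (2:ℂ)⁻¹ * ((ip a y : ℂ) - Complex.I * (ip b y : ℂ)) := by
    intro y
    have hfun : phiz φ p = (2:ℂ)⁻¹ • (toC a - Complex.I • toC b) := rfl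
    rw [hfun]
    simp only [cdot_expand, Pi.smul_apply, Pi.sub_apply, smul_eq_mul, toC, ip_expand]
    push_cast
    ring
  -- normal vector facts
  have ipcb : ip (cross a b) (cross a b) = L^4 := by
    rw [lagrange, ipaa, ipbb, ipab]; ring
  have hnormsq : ‖cross a b‖^2 = L^4 := by
    rw [← real_inner_self_eq_norm_sq]
    exact ipcb
  have hnorm : ‖cross a b‖ = L^2 := by
    nlinarith [norm_nonneg (cross a b), sq_nonneg (‖cross a b‖ - L^2), sq_nonneg (‖cross a b‖ + L^2)]
  have hnormne : ‖cross a b‖ ≠ 0 := by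
    rw [hnorm]; positivity
  have hnv : nvec φ p = ‖cross a b‖⁻¹ • cross a b := rfl
  have ipna : ip (nvec φ p) a = 0 := by
    rw [hnv, ip_smul_left, ip_comm, ip_cross_left]; ring
  have ipnb : ip (nvec φ p) b = 0 := by
    rw [hnv, ip_smul_left, ip_comm, ip_cross_right]; ring
  have ipnn : ip (nvec φ p) (nvec φ p) = 1 := by
    rw [hnv, ip_smul_left, ip_comm, ip_smul_left, ip_comm, ipcb, hnorm]
    field_simp
  -- value of dz lam
  have hdzlam : dz (fun q => (lam q : ℂ)) p = (2:ℂ)⁻¹ * ((Lu:ℂ) - Complex.I * (Lv:ℂ)) := by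
    rw [dz, pu_ofReal hlamD, pv_ofReal hlamD]
    simp only [smul_eq_mul]
    rfl
  have hLne : (L : ℂ) ≠ 0 := by
    exact_mod_cast ne_of_gt hL
  -- define the difference vector
  set α : ℂ := 2 * dz (fun q => (lam q : ℂ)) p / (L : ℂ) with hα
  set μ : ℂ := muQ φ p with hμ
  set v : Fin 3 → ℂ := fun j => dz (phiz φ) p j
      - (α • phiz φ p + μ • toC (nvec φ p)) j with hv
  have cdot_v : ∀ y : E3, cdot v (toC y)
      = cdot (dz (phiz φ) p) (toC y) - α * cdot (phiz φ p) (toC y)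
        - μ * cdot (toC (nvec φ p)) (toC y) := by
    intro y
    simp only [cdot_expand, hv, Pi.add_apply, Pi.smul_apply, smul_eq_mul]
    ring
  have hαval : α = ((Lu:ℂ) - Complex.I * (Lv:ℂ)) / (L:ℂ) := by
    rw [hα, hdzlam]; field_simp
  have c1 : cdot v (toC a) = 0 := by
    rw [cdot_v, cdotZ, cdotPhiz, cdot_toC, hαval, I1, I6, I2, ipaa, ipna]
    have hba : ip b a = 0 := by rw [ip_comm]; exact ipab
    rw [hba]
    push_cast
    field_simp
    ring
  have c2 : cdot v (toC b) = 0 := by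
    rw [cdot_v, cdotZ, cdotPhiz, cdot_toC, hαval, I5, I4, I3, ipab, ipbb, ipnb]
    push_cast
    field_simp
    linear_combination (-(4:ℂ) * (L:ℂ)^2 * (Lv:ℂ)) * Complex.I_sq
  have cn : cdot v (toC (nvec φ p)) = 0 := by
    rw [cdot_v, cdotPhiz, cdot_toC, ipnn]
    have hμ2 : cdot (dz (phiz φ) p) (toC (nvec φ p)) = μ := rfl
    have han : ip a (nvec φ p) = 0 := by rw [ip_comm]; exact ipna
    have hbn : ip b (nvec φ p) = 0 := by rw [ip_comm]; exact ipnb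
    rw [hμ2, han, hbn]
    push_cast
    ring
  have c3 : cdot v (toC (cross a b)) = 0 := by
    have h := cn
    rw [hnv, cdot_toC_smul_right] at h
    have hne : ((‖cross a b‖⁻¹ : ℝ) : ℂ) ≠ 0 := by
      simp [hnormne]
    exact (mul_eq_zero.mp h).resolve_left hne
  -- conclude
  funext j
  have hd := decomp a b v ipab c1 c2 c3 j
  rw [ipaa, ipbb] at hd
  have hfac : ((L:ℂ)^2 * (L:ℂ)^2) * v j = 0 := by
    push_cast at hd
    linear_combination hd
  have hne : ((L:ℂ)^2 * (L:ℂ)^2) ≠ 0 := by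
    apply mul_ne_zero <;> exact pow_ne_zero _ hLne
  have hvj : v j = 0 := by
    rcases mul_eq_zero.mp hfac with h' | h'
    · exact absurd h' hne
    · exact h'
  have : dz (phiz φ) p j - (α • phiz φ p + μ • toC (nvec φ p)) j = 0 := hvj
  have := sub_eq_zero.mp this
  exact this
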